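/- For every nonempty finite set X, every nonempty subset C ⊆ X, every a ∈ ℝ, and every x ∈ X, the Shapley value of the scaled game a·g_C satisfies (SV(a·g_C))(x) = a/|C| if x ∈ C, and (SV(a·g_C))(x) = 0 if x ∉ C. -/

import Mathlib

open Finset

/-- The game `g_C` associated with a nonempty subset `C ⊆ X`:
`g_C(M) = 1` if `C ∩ M ≠ ∅` and `g_C(M) = 0` otherwise. -/
noncomputable def gC {α : Type*} [DecidableEq α] (C : Finset α) : Finset α → ℝ :=
  fun M => if (C ∩ M).Nonempty then 1 else 0

/-- The Shapley value of a game `g : 𝒫(X) → ℝ`: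
`(SV g)(x) = (1/|X|!) ∑_{M ⊆ X, x ∈ M} (|M|-1)!(|X|-|M|)!(g(M) - g(M ∖ {x}))`. -/
noncomputable def SV {α : Type*} [Fintype α] [DecidableEq α]
    (g : Finset α → ℝ) (x : α) : ℝ :=
  (1 / (Nat.factorial (Fintype.card α) : ℝ)) *
    ∑ M ∈ Finset.univ.filter (fun M : Finset α => x ∈ M),
      (Nat.factorial (M.card - 1) : ℝ) * (Nat.factorial (Fintype.card α - M.card) : ℝ) *
        (g M - g (M.erase x))

private lemma key (c m : ℕ) :
    (c+1) * ∑ s ∈ range (m+1), m.choose s * (s.factorial * (c+m-s).factorial)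
      = (c+m+1).factorial := by
  have h1 : ∑ s ∈ range (m+1), m.choose s * (s.factorial * (c+m-s).factorial)
      = ∑ k ∈ range (m+1), m.choose (m-k) * ((m-k).factorial * (c+m-(m-k)).factorial) := by
    rw [← Finset.sum_range_reflect]
    apply Finset.sum_congr rfl
    intro k hk
    congr 1 <;> omega
  have h2 : ∀ k ∈ range (m+1),
      m.choose (m-k) * ((m-k).factorial * (c+m-(m-k)).factorial)
        = m.factorial * c.factorial * (c+k).choose c := by
    intro k hk
    have hkm : k ≤ m := Nat.lt_succ_iff.mp (mem_range.mp hk)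
    have e1 : c + m - (m - k) = c + k := by omega
    have e0 : m.choose (m-k) = m.choose k := Nat.choose_symm hkm
    rw [e1, e0]
    have e2 : (c+k).factorial = (c+k).choose k * k.factorial * c.factorial := by
      have := Nat.choose_mul_factorial_mul_factorial (Nat.le_add_left k c)
      simpa [Nat.add_sub_cancel] using this.symm
    have e3 : (c+k).choose k = (c+k).choose c := Nat.choose_symm_add.symm
    have e4 : m.choose k * k.factorial * (m-k).factorial = m.factorial :=
      Nat.choose_mul_factorial_mul_factorial hkm
    calc m.choose k * ((m-k).factorial * (c+k).factorial)
        = (m.choose k * k.factorial * (m-k).factorial) * c.factorial * ((c+k).choose c) := by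
          rw [e2, ← e3]; ring
      _ = m.factorial * c.factorial * (c+k).choose c := by rw [e4]
  have h3 : ∑ k ∈ range (m+1), (c+k).choose c = (c+m+1).choose (c+1) := by
    rw [← Nat.sum_Icc_choose]
    rw [← Finset.Ico_add_one_right_eq_Icc, Finset.sum_Ico_eq_sum_range]
    apply Finset.sum_congr
    · congr 1; omega
    · intro k hk; rfl
  rw [h1, Finset.sum_congr rfl h2, ← Finset.mul_sum, h3]
  have := Nat.choose_mul_factorial_mul_factorial (show c+1 ≤ c+m+1 by omega)
  have e : c + m + 1 - (c+1) = m := by omega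
  rw [e] at this
  calc (c+1) * (m.factorial * c.factorial * (c+m+1).choose (c+1))
      = (c+m+1).choose (c+1) * (c+1).factorial * m.factorial := by
        rw [Nat.factorial_succ]; ring
    _ = (c+m+1).factorial := this

/-- The Shapley value of the scaled game `a · g_C` is `a/|C|` at members of `C`
and `0` elsewhere. -/
theorem stmt5 {α : Type*} [Fintype α] [DecidableEq α] [Nonempty α]
    (C : Finset α) (hC : C.Nonempty) (a : ℝ) (x : α) :
    SV (fun M => a * gC C M) x = if x ∈ C then a / (C.card : ℝ) else 0 := by
  set n := Fintype.card α with hn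
  by_cases hx : x ∈ C
  · simp only [hx, if_true]
    -- step 1: restrict the sum
    have step1 : ∑ M ∈ Finset.univ.filter (fun M : Finset α => x ∈ M),
        ((M.card - 1).factorial : ℝ) * ((n - M.card).factorial : ℝ)
          * (a * gC C M - a * gC C (M.erase x))
        = ∑ M ∈ Finset.univ.filter (fun M : Finset α => x ∈ M ∧ C ∩ M.erase x = ∅),
            ((M.card - 1).factorial : ℝ) * ((n - M.card).factorial : ℝ) * a := by
      rw [Finset.sum_filter, Finset.sum_filter]
      apply Finset.sum_congr rfl
      intro M _
      by_cases hxM : x ∈ M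
      · have hM1 : gC C M = 1 := by
          have : (C ∩ M).Nonempty := ⟨x, Finset.mem_inter.mpr ⟨hx, hxM⟩⟩
          simp [gC, this]
        by_cases hCE : C ∩ M.erase x = ∅
        · have : gC C (M.erase x) = 0 := by
            simp only [gC, hCE, Finset.not_nonempty_empty, if_neg]
            simp
          simp [hxM, hCE, hM1, this]
        · have hne : (C ∩ M.erase x).Nonempty := Finset.nonempty_iff_ne_empty.mpr hCE
          have : gC C (M.erase x) = 1 := by simp [gC, hne]
          simp [hxM, hCE, hM1, this]
      · simp [hxM]
    -- step 2: bijection with subsets of Cᶜ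
    have step2 : ∑ M ∈ Finset.univ.filter (fun M : Finset α => x ∈ M ∧ C ∩ M.erase x = ∅),
        ((M.card - 1).factorial : ℝ) * ((n - M.card).factorial : ℝ) * a
        = ∑ S ∈ Cᶜ.powerset,
            ((S.card).factorial : ℝ) * ((n - 1 - S.card).factorial : ℝ) * a := by
      apply Finset.sum_nbij' (fun M => M.erase x) (fun S => insert x S)
      · intro M hM
        simp only [Finset.mem_filter, Finset.mem_univ, true_and] at hM
        rw [Finset.mem_powerset]
        intro y hy
        rw [Finset.mem_compl]
        intro hyC
        have : y ∈ C ∩ M.erase x := Finset.mem_inter.mpr ⟨hyC, hy⟩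
        rw [hM.2] at this
        exact absurd this (Finset.notMem_empty y)
      · intro S hS
        rw [Finset.mem_powerset] at hS
        simp only [Finset.mem_filter, Finset.mem_univ, true_and]
        have hxS : x ∉ S := fun h => (Finset.mem_compl.mp (hS h)) hx
        constructor
        · exact Finset.mem_insert_self x S
        · rw [Finset.erase_insert hxS]
          rw [Finset.eq_empty_iff_forall_notMem]
          intro y hy
          obtain ⟨hyC, hyS⟩ := Finset.mem_inter.mp hy
          exact (Finset.mem_compl.mp (hS hyS)) hyC
      · intro M hM
        simp only [Finset.mem_filter, Finset.mem_univ, true_and] at hM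
        exact Finset.insert_erase hM.1
      · intro S hS
        rw [Finset.mem_powerset] at hS
        have hxS : x ∉ S := fun h => (Finset.mem_compl.mp (hS h)) hx
        exact Finset.erase_insert hxS
      · intro M hM
        simp only [Finset.mem_filter, Finset.mem_univ, true_and] at hM
        have hce : (M.erase x).card = M.card - 1 := Finset.card_erase_of_mem hM.1
        have hpos : 1 ≤ M.card := Finset.card_pos.mpr ⟨x, hM.1⟩
        have h2 : n - 1 - (M.card - 1) = n - M.card := by omega
        rw [hce, h2]
    -- step 3: group by cardinality
    have step3 : ∑ S ∈ Cᶜ.powerset,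
        ((S.card).factorial : ℝ) * ((n - 1 - S.card).factorial : ℝ) * a
        = ∑ s ∈ range (Cᶜ.card + 1),
            ((Cᶜ.card.choose s : ℕ) : ℝ) * ((s.factorial : ℝ) * ((n - 1 - s).factorial : ℝ) * a) := by
      erw [Finset.powerset_card_disjiUnion, Finset.sum_disjiUnion]
      apply Finset.sum_congr rfl
      intro s _
      rw [Finset.sum_congr rfl (fun S hS => by
        rw [(Finset.mem_powersetCard.mp hS).2]), Finset.sum_const,
        Finset.card_powersetCard, nsmul_eq_mul]
    -- arithmetic
    have hcpos : 1 ≤ C.card := Finset.card_pos.mpr hC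
    obtain ⟨c, hc⟩ : ∃ c, C.card = c + 1 := ⟨C.card - 1, by omega⟩
    have hcompl : C.card + Cᶜ.card = n := Finset.card_add_card_compl C
    set m := Cᶜ.card with hm
    have hnm : n = c + m + 1 := by omega
    have hkey := key c m
    have hsum_nat : (C.card : ℝ) * ∑ s ∈ range (m+1),
        ((m.choose s : ℕ) : ℝ) * ((s.factorial : ℝ) * ((n - 1 - s).factorial : ℝ))
        = (n.factorial : ℝ) := by
      have h5 : ∀ s, n - 1 - s = c + m - s := fun s => by omega
      simp_rw [h5, hc, hnm]
      exact_mod_cast hkey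
    have hCc : ((C.card : ℕ) : ℝ) ≠ 0 := by
      have : (0:ℕ) < C.card := hcpos
      exact_mod_cast this.ne'
    have hfac : ((n.factorial : ℕ) : ℝ) ≠ 0 := by
      exact_mod_cast n.factorial_ne_zero
    have hS : ∑ s ∈ range (m+1),
        ((m.choose s : ℕ) : ℝ) * ((s.factorial : ℝ) * ((n - 1 - s).factorial : ℝ))
        = (n.factorial : ℝ) / (C.card : ℝ) := by
      rw [eq_div_iff hCc]
      linarith [hsum_nat]
    simp only [SV, ← hn]
    rw [step1, step2, step3]
    have h6 : ∀ s : ℕ, ((m.choose s : ℕ) : ℝ) * ((s.factorial : ℝ) * ((n - 1 - s).factorial : ℝ) * a)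
        = ((m.choose s : ℕ) : ℝ) * ((s.factorial : ℝ) * ((n - 1 - s).factorial : ℝ)) * a :=
      fun s => by ring
    simp_rw [h6]
    rw [← Finset.sum_mul, hS]
    field_simp
  · simp only [hx, if_neg, if_false]
    have : ∀ M : Finset α, gC C (M.erase x) = gC C M := by
      intro M
      have : C ∩ M.erase x = C ∩ M := by
        ext y
        simp only [Finset.mem_inter, Finset.mem_erase]
        constructor
        · rintro ⟨hyC, _, hyM⟩; exact ⟨hyC, hyM⟩
        · rintro ⟨hyC, hyM⟩; exact ⟨hyC, fun h => hx (h ▸ hyC), hyM⟩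
      simp [gC, this]
    simp [SV, this]
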